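/- Let l > 1 and let c₀, k₀ : [0,∞) → ℝ be continuous and nonnegative functions such that ∫₀^T k₀(t) exp[(l−1)∫₀^t c₀(s) ds] dt → ∞ as T → ∞. Then for every w₀ > 0 there is no differentiable function w : [0,∞) → ℝ with w(0) = w₀ and w′(t) = c₀(t) w(t) + k₀(t) w(t)^l for all t ≥ 0. -/

import Mathlib

open MeasureTheory Set Filter

/-- If `l > 1`, `c₀, k₀` are continuous and nonnegative on `[0,∞)` and
`∫₀^T k₀(t) exp[(l−1)∫₀^t c₀] dt → ∞` as `T → ∞`, then for every `w₀ > 0` the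
Cauchy problem `w′ = c₀(t)w + k₀(t)w^l`, `w(0) = w₀` has no global solution. -/
theorem stmt_3 (l : ℝ) (hl : 1 < l) (c₀ k₀ : ℝ → ℝ)
    (hc_cont : ContinuousOn c₀ (Ici 0)) (hc_nonneg : ∀ t ≥ (0:ℝ), 0 ≤ c₀ t)
    (hk_cont : ContinuousOn k₀ (Ici 0)) (hk_nonneg : ∀ t ≥ (0:ℝ), 0 ≤ k₀ t)
    (hdiv : Tendsto
      (fun T => ∫ t in (0:ℝ)..T, k₀ t * Real.exp ((l - 1) * ∫ s in (0:ℝ)..t, c₀ s))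
      atTop atTop) :
    ∀ w₀ : ℝ, 0 < w₀ →
      ¬ ∃ w : ℝ → ℝ, w 0 = w₀ ∧
        ∀ t ≥ (0:ℝ), HasDerivAt w (c₀ t * w t + k₀ t * w t ^ l) t := by
  rintro w₀ hw₀ ⟨w, hw0, hw'⟩
  set F : ℝ → ℝ := fun t => ∫ s in (0:ℝ)..t, c₀ s with hF_def
  set g : ℝ → ℝ := fun t => k₀ t * Real.exp ((l - 1) * F t) with hg_def
  set G : ℝ → ℝ := fun T => ∫ t in (0:ℝ)..T, g t with hG_def
  -- interval integrability of c₀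
  have hc_int : ∀ b : ℝ, 0 ≤ b → IntervalIntegrable c₀ volume 0 b := by
    intro b hb
    apply ContinuousOn.intervalIntegrable
    apply hc_cont.mono
    rw [uIcc_of_le hb]
    exact fun y hy => hy.1
  -- continuity of F on [0,∞)
  have hFcont : ContinuousOn F (Ici 0) := by
    intro x hx
    have hx0 : (0:ℝ) ≤ x := hx
    have h_int : IntegrableOn c₀ (uIcc 0 (x + 1)) volume := by
      rw [uIcc_of_le (by linarith)]
      exact (hc_cont.mono (fun y hy => hy.1)).integrableOn_Icc
    have hC := intervalIntegral.continuousOn_primitive_interval h_int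
    have hxmem : x ∈ uIcc (0:ℝ) (x + 1) := by
      rw [uIcc_of_le (by linarith)]; exact ⟨hx0, by linarith⟩
    have hmem : uIcc (0:ℝ) (x + 1) ∈ nhdsWithin x (Ici 0) := by
      rw [uIcc_of_le (by linarith)]
      rw [mem_nhdsWithin]
      exact ⟨Iio (x + 1), isOpen_Iio, by simp, fun y hy => ⟨hy.2, le_of_lt hy.1⟩⟩
    exact (hC x hxmem).mono_of_mem_nhdsWithin hmem
  -- derivative of F
  have hF'pos : ∀ x : ℝ, 0 < x → HasDerivAt F (c₀ x) x := by
    intro x hx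
    apply intervalIntegral.integral_hasDerivAt_right (hc_int x hx.le)
    · exact ⟨Ici 0, Ici_mem_nhds hx, hc_cont.aestronglyMeasurable measurableSet_Ici⟩
    · exact (hc_cont.continuousWithinAt (le_of_lt hx)).continuousAt (Ici_mem_nhds hx)
  have hF'zero : HasDerivWithinAt F (c₀ 0) (Ici 0) 0 := by
    apply intervalIntegral.integral_hasDerivWithinAt_right (t := Ioi 0)
      (hc_int 0 le_rfl)
    · exact ⟨Ici 0, mem_of_superset self_mem_nhdsWithin Ioi_subset_Ici_self,
        hc_cont.aestronglyMeasurable measurableSet_Ici⟩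
    · exact (hc_cont.continuousWithinAt (mem_Ici.mpr le_rfl)).mono Ioi_subset_Ici_self
  have hF' : ∀ x : ℝ, 0 ≤ x → HasDerivWithinAt F (c₀ x) (Ici 0) x := by
    intro x hx
    rcases eq_or_lt_of_le hx with h | h
    · rw [← h]; exact hF'zero
    · exact (hF'pos x h).hasDerivWithinAt
  -- continuity and integrability of g
  have hg_cont : ContinuousOn g (Ici 0) :=
    hk_cont.mul (Real.continuous_exp.comp_continuousOn (continuousOn_const.mul hFcont))
  have hg_int : ∀ b : ℝ, 0 ≤ b → IntervalIntegrable g volume 0 b := by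
    intro b hb
    apply ContinuousOn.intervalIntegrable
    apply hg_cont.mono
    rw [uIcc_of_le hb]
    exact fun y hy => hy.1
  -- derivative of G
  have hG' : ∀ x : ℝ, 0 ≤ x → HasDerivWithinAt G (g x) (Ici 0) x := by
    intro x hx
    rcases eq_or_lt_of_le hx with h | h
    · rw [← h]
      apply intervalIntegral.integral_hasDerivWithinAt_right (t := Ioi 0)
        (hg_int 0 le_rfl)
      · exact ⟨Ici 0, mem_of_superset self_mem_nhdsWithin Ioi_subset_Ici_self,
          hg_cont.aestronglyMeasurable measurableSet_Ici⟩
      · exact (hg_cont.continuousWithinAt (mem_Ici.mpr le_rfl)).mono Ioi_subset_Ici_self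
    · apply HasDerivAt.hasDerivWithinAt
      apply intervalIntegral.integral_hasDerivAt_right (hg_int x h.le)
      · exact ⟨Ici 0, Ici_mem_nhds h, hg_cont.aestronglyMeasurable measurableSet_Ici⟩
      · exact (hg_cont.continuousWithinAt (le_of_lt h)).continuousAt (Ici_mem_nhds h)
  -- positivity of w
  have hwpos : ∀ t : ℝ, 0 ≤ t → 0 < w t := by
    by_contra h
    push_neg at h
    obtain ⟨t₁, ht₁, hwt₁⟩ := h
    set S : Set ℝ := Ici 0 ∩ w ⁻¹' (Iic 0) with hS_def
    have hwcont : ContinuousOn w (Ici 0) := fun x hx =>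
      ((hw' x hx).continuousAt).continuousWithinAt
    have hS_closed : IsClosed S :=
      hwcont.preimage_isClosed_of_isClosed isClosed_Ici isClosed_Iic
    have hS_ne : S.Nonempty := ⟨t₁, ht₁, hwt₁⟩
    have hS_bdd : BddBelow S := ⟨0, fun y hy => hy.1⟩
    set t₀ := sInf S with ht₀_def
    have ht₀S : t₀ ∈ S := hS_closed.csInf_mem hS_ne hS_bdd
    have ht₀0 : 0 ≤ t₀ := ht₀S.1
    have hwt₀ : w t₀ ≤ 0 := ht₀S.2
    have hpos_before : ∀ x : ℝ, 0 ≤ x → x < t₀ → 0 < w x := by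
      intro x hx hxt
      by_contra hx'
      push_neg at hx'
      exact absurd (csInf_le hS_bdd ⟨hx, hx'⟩) (not_le.mpr hxt)
    have hmono : MonotoneOn w (Icc 0 t₀) := by
      apply monotoneOn_of_hasDerivWithinAt_nonneg (f' := fun x => c₀ x * w x + k₀ x * w x ^ l)
        (convex_Icc 0 t₀)
      · exact fun x hx => ((hw' x hx.1).continuousAt).continuousWithinAt
      · intro x hx
        rw [interior_Icc] at hx
        exact (hw' x hx.1.le).hasDerivWithinAt
      · intro x hx
        rw [interior_Icc] at hx
        have hwx : 0 < w x := hpos_before x hx.1.le hx.2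
        have : (0:ℝ) ≤ w x ^ l := Real.rpow_nonneg hwx.le l
        have h1 : 0 ≤ c₀ x * w x := mul_nonneg (hc_nonneg x hx.1.le) hwx.le
        have h2 : 0 ≤ k₀ x * w x ^ l := mul_nonneg (hk_nonneg x hx.1.le) this
        linarith
    have h0t₀ : (0:ℝ) ∈ Icc (0:ℝ) t₀ := ⟨le_rfl, ht₀0⟩
    have := hmono h0t₀ (right_mem_Icc.mpr ht₀0) ht₀0
    rw [hw0] at this
    linarith
  -- the conserved quantity
  set φ : ℝ → ℝ := fun t => w t ^ (1 - l) * Real.exp ((l - 1) * F t) + (l - 1) * G t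
    with hφ_def
  have hφ' : ∀ x : ℝ, 0 ≤ x → HasDerivWithinAt φ 0 (Ici 0) x := by
    intro x hx
    have hwx : 0 < w x := hwpos x hx
    have hw_d : HasDerivWithinAt w (c₀ x * w x + k₀ x * w x ^ l) (Ici 0) x :=
      (hw' x hx).hasDerivWithinAt
    have hA : HasDerivWithinAt (fun t => w t ^ (1 - l))
        ((c₀ x * w x + k₀ x * w x ^ l) * (1 - l) * w x ^ (1 - l - 1)) (Ici 0) x :=
      hw_d.rpow_const (Or.inl hwx.ne')
    have hB : HasDerivWithinAt (fun t => Real.exp ((l - 1) * F t))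
        (Real.exp ((l - 1) * F x) * ((l - 1) * c₀ x)) (Ici 0) x :=
      ((hF' x hx).const_mul (l - 1)).exp
    have hAB := hA.mul hB
    have hCG : HasDerivWithinAt (fun t => (l - 1) * G t) ((l - 1) * g x) (Ici 0) x :=
      (hG' x hx).const_mul (l - 1)
    have htotal := hAB.add hCG
    convert htotal using 1
    · rfl
    · rfl
    · rfl
    have h1 : w x ^ (1 - l - 1) * w x = w x ^ (1 - l) := by
      rw [← Real.rpow_add_one hwx.ne']
      ring_nf
    have h2 : w x ^ (1 - l - 1) * w x ^ l = 1 := by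
      rw [← Real.rpow_add hwx]
      norm_num
    simp only [hg_def]
    set E := Real.exp ((l - 1) * F x)
    set p := w x
    linear_combination (-((1 - l) * c₀ x * E)) * h1 + (-((1 - l) * k₀ x * E)) * h2
  -- φ is constant
  have hφconst : ∀ b : ℝ, 0 ≤ b → φ b = φ 0 := by
    intro b hb
    have hcont : ContinuousOn φ (Icc 0 b) := fun x hx =>
      ((hφ' x hx.1).continuousWithinAt).mono (fun y hy => hy.1)
    have hderiv : ∀ x ∈ Ico (0:ℝ) b, HasDerivWithinAt φ 0 (Ici x) x := fun x hx =>
      (hφ' x hx.1).mono (Ici_subset_Ici.mpr hx.1)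
    exact constant_of_has_deriv_right_zero hcont hderiv b (right_mem_Icc.mpr hb)
  have hφ0 : φ 0 = w₀ ^ (1 - l) := by
    simp only [hφ_def, hG_def, hF_def, intervalIntegral.integral_same, mul_zero,
      Real.exp_zero, mul_one, add_zero, hw0]
  -- contradiction with divergence
  obtain ⟨b, hbM, hb0⟩ :
      ∃ b, w₀ ^ (1 - l) / (l - 1) < G b ∧ 0 ≤ b := by
    have := (hdiv.eventually (eventually_gt_atTop (w₀ ^ (1 - l) / (l - 1)))).and
      (eventually_ge_atTop (0:ℝ))
    exact this.exists
  have hkey := hφconst b hb0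
  rw [hφ0] at hkey
  have hEpos : 0 < Real.exp ((l - 1) * F b) := Real.exp_pos _
  have hwb : 0 < w b ^ (1 - l) := Real.rpow_pos_of_pos (hwpos b hb0) _
  have hlt : w₀ ^ (1 - l) < (l - 1) * G b := by
    rw [mul_comm]
    exact (div_lt_iff₀ (by linarith)).mp hbM
  have : (l - 1) * G b < φ b := by
    simp only [hφ_def]
    nlinarith
  rw [hkey] at this
  linarith
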